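/- The orbit of the rank-2l skew-symmetric N×N complex matrices under GL(N,ℂ) acting by congruence (A ↦ gAgᵀ) has dimension l(2N−1) − 2l²; equivalently, the stabilizer of the standard rank-2l skew-symmetric matrix C_l in GL(N,ℂ) has dimension N² − l(2N−1) + 2l². -/

import Mathlib

/- Formalization of a statement about spinor varieties (Galgano, arXiv:2302.05295). -/

noncomputable section
open Matrix

/-- The standard skew-symmetric matrix `C_l` of rank `2l`: block diagonal with `l`
blocks `[[0,1],[-1,0]]` and a zero block of size `N - 2l`. -/
def Cmat (N l : ℕ) : Matrix (Fin N) (Fin N) ℂ := fun i j =>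
  if i.1 < 2 * l ∧ j.1 = i.1 + 1 ∧ Even i.1 then 1
  else if j.1 < 2 * l ∧ i.1 = j.1 + 1 ∧ Even j.1 then -1 else 0

/-- The differential at the identity of the congruence action `g ↦ g C gᵀ` of
`GL(N, ℂ)` on `C`: `X ↦ X C + C Xᵀ`.  Its range is the tangent space at `C` to the
congruence orbit of `C`, and its kernel is the Lie algebra of the stabilizer of `C`. -/
def congDiff (N : ℕ) (C : Matrix (Fin N) (Fin N) ℂ) :
    Matrix (Fin N) (Fin N) ℂ →ₗ[ℂ] Matrix (Fin N) (Fin N) ℂ where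
  toFun X := X * C + C * Xᵀ
  map_add' X Y := by
    simp [Matrix.add_mul, Matrix.mul_add, Matrix.transpose_add]
    abel
  map_smul' c X := by
    simp [Matrix.transpose_smul, Matrix.smul_mul, Matrix.mul_smul, smul_add]

namespace Aux

variable (N l : ℕ)

def d : Fin N → ℂ := fun i => if i.1 < 2 * l then 1 else 0

def P : Matrix (Fin N) (Fin N) ℂ := Matrix.diagonal (d N l)

lemma Cmat_row_zero {i : Fin N} (hi : 2 * l ≤ i.1) (j : Fin N) : Cmat N l i j = 0 := by
  have h1 : ¬(i.1 < 2 * l ∧ j.1 = i.1 + 1 ∧ Even i.1) := by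
    simp only [Nat.even_iff]; omega
  have h2 : ¬(j.1 < 2 * l ∧ i.1 = j.1 + 1 ∧ Even j.1) := by
    simp only [Nat.even_iff]; omega
  simp only [Cmat, h1, h2, if_false]

lemma Cmat_col_zero {j : Fin N} (hj : 2 * l ≤ j.1) (i : Fin N) : Cmat N l i j = 0 := by
  have h1 : ¬(i.1 < 2 * l ∧ j.1 = i.1 + 1 ∧ Even i.1) := by
    simp only [Nat.even_iff]; omega
  have h2 : ¬(j.1 < 2 * l ∧ i.1 = j.1 + 1 ∧ Even j.1) := by
    simp only [Nat.even_iff]; omega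
  simp only [Cmat, h1, h2, if_false]

lemma Cmat_transpose : (Cmat N l)ᵀ = -Cmat N l := by
  ext i j
  simp only [transpose_apply, Matrix.neg_apply, Cmat, Nat.even_iff]
  split_ifs <;> first | ring1 | (exfalso; omega)

lemma Cmat_mul_Cmat (h2l : 2 * l ≤ N) : Cmat N l * Cmat N l = -(P N l) := by
  ext i j
  rw [mul_apply]
  have hiN : i.1 < N := i.2
  have hjN : j.1 < N := j.2
  by_cases hi : i.1 < 2 * l
  · by_cases he : Even i.1
    · rw [Nat.even_iff] at he
      have hlt : i.1 + 1 < N := by omega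
      rw [Finset.sum_eq_single (⟨i.1 + 1, hlt⟩ : Fin N)]
      · simp only [Cmat, P, d, Matrix.neg_apply, diagonal_apply, Nat.even_iff, Fin.ext_iff, Fin.val_mk, true_and, and_true]
        split_ifs <;> first | ring1 | (exfalso; omega)
      · intro b _ hb
        have hb' : b.1 ≠ i.1 + 1 := by
          intro h; exact hb (Fin.ext h)
        have h1 : ¬(i.1 < 2 * l ∧ b.1 = i.1 + 1 ∧ Even i.1) := by
          simp only [Nat.even_iff]; omega
        have h2 : ¬(b.1 < 2 * l ∧ i.1 = b.1 + 1 ∧ Even b.1) := by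
          simp only [Nat.even_iff]; omega
        simp only [Cmat, h1, h2, if_false, zero_mul]
      · intro h; exact absurd (Finset.mem_univ _) h
    · rw [Nat.not_even_iff] at he
      have hpos : i.1 - 1 < N := by omega
      rw [Finset.sum_eq_single (⟨i.1 - 1, hpos⟩ : Fin N)]
      · simp only [Cmat, P, d, Matrix.neg_apply, diagonal_apply, Nat.even_iff, Fin.ext_iff, Fin.val_mk, true_and, and_true]
        split_ifs <;> first | ring1 | (exfalso; omega)
      · intro b _ hb
        have hb' : b.1 ≠ i.1 - 1 := by
          intro h; exact hb (Fin.ext h)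
        have h1 : ¬(i.1 < 2 * l ∧ b.1 = i.1 + 1 ∧ Even i.1) := by
          simp only [Nat.even_iff]; omega
        have h2 : ¬(b.1 < 2 * l ∧ i.1 = b.1 + 1 ∧ Even b.1) := by
          simp only [Nat.even_iff]; omega
        simp only [Cmat, h1, h2, if_false, zero_mul]
      · intro h; exact absurd (Finset.mem_univ _) h
  · rw [Finset.sum_eq_zero]
    · simp only [P, d, Matrix.neg_apply, diagonal_apply]
      split_ifs <;> simp_all
    · intro k _
      rw [Cmat_row_zero N l (le_of_not_gt hi), zero_mul]

end Aux

namespace Aux2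
open Aux

variable (N l : ℕ)

lemma proj_eq {M : Matrix (Fin N) (Fin N) ℂ}
    (h0 : ∀ i j : Fin N, 2 * l ≤ i.1 → 2 * l ≤ j.1 → M i j = 0) :
    P N l * M + M * P N l - (P N l * M) * P N l = M := by
  ext i j
  simp only [Matrix.sub_apply, Matrix.add_apply, P, diagonal_mul, mul_diagonal, d]
  by_cases hi : i.1 < 2 * l <;> by_cases hj : j.1 < 2 * l <;>
    simp only [hi, hj, if_true, if_false] <;>
    first
      | ring1
      | (rw [h0 i j (by omega) (by omega)]; ring1)
      | rw [h0 i j (by omega) (by omega)]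

lemma aux_transpose : ((1/2 : ℂ) • P N l - 1)ᵀ = (1/2 : ℂ) • P N l - 1 := by
  rw [transpose_sub, transpose_smul, transpose_one, P, diagonal_transpose]

end Aux2

namespace Aux3
open Aux Aux2

variable (N l : ℕ)

lemma surj_aux (h2l : 2 * l ≤ N) {M : Matrix (Fin N) (Fin N) ℂ}
    (hsk : Mᵀ = -M)
    (h0 : ∀ i j : Fin N, 2 * l ≤ i.1 → 2 * l ≤ j.1 → M i j = 0) :
    congDiff N (Cmat N l) (((1/2 : ℂ) • P N l - 1) * (M * Cmat N l)) = M := by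
  have hCC : Cmat N l * Cmat N l = -(P N l) := Cmat_mul_Cmat N l h2l
  have hCT : (Cmat N l)ᵀ = -(Cmat N l) := Cmat_transpose N l
  have hAT : ((1/2 : ℂ) • P N l - 1)ᵀ = (1/2 : ℂ) • P N l - 1 := aux_transpose N l
  show (((1/2 : ℂ) • P N l - 1) * (M * Cmat N l)) * Cmat N l
      + Cmat N l * (((1/2 : ℂ) • P N l - 1) * (M * Cmat N l))ᵀ = M
  have eA1 : ((1/2 : ℂ) • P N l - 1) * (M * P N l)
      = (1/2 : ℂ) • (P N l * M * P N l) - M * P N l := by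
    rw [sub_mul, smul_mul_assoc, one_mul, ← mul_assoc]
  have eA2 : P N l * M * ((1/2 : ℂ) • P N l - 1)
      = (1/2 : ℂ) • (P N l * M * P N l) - P N l * M := by
    rw [mul_sub, mul_smul_comm, mul_one]
  have e1 : (((1/2 : ℂ) • P N l - 1) * (M * Cmat N l)) * Cmat N l
      = -((1/2 : ℂ) • (P N l * M * P N l) - M * P N l) := by
    rw [mul_assoc, mul_assoc M, hCC, mul_neg, mul_neg, eA1]
  have e2 : Cmat N l * (((1/2 : ℂ) • P N l - 1) * (M * Cmat N l))ᵀ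
      = -((1/2 : ℂ) • (P N l * M * P N l) - P N l * M) := by
    rw [transpose_mul, hAT, transpose_mul, hCT, hsk, neg_mul, mul_neg, neg_neg,
      ← mul_assoc (Cmat N l) ((Cmat N l) * M), ← mul_assoc (Cmat N l) (Cmat N l) M,
      hCC, neg_mul, neg_mul, eA2]
  rw [e1, e2]
  conv_rhs => rw [← proj_eq N l h0]
  module

end Aux3

namespace Aux4
open Aux Aux2 Aux3

variable (N l : ℕ)

def V : Submodule ℂ (Matrix (Fin N) (Fin N) ℂ) where
  carrier := {M | Mᵀ = -M ∧ ∀ i j : Fin N, 2 * l ≤ i.1 → 2 * l ≤ j.1 → M i j = 0}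
  add_mem' := by
    rintro a b ⟨ha1, ha2⟩ ⟨hb1, hb2⟩
    refine ⟨?_, fun i j hi hj => ?_⟩
    · rw [transpose_add, ha1, hb1, neg_add]
    · rw [Matrix.add_apply, ha2 i j hi hj, hb2 i j hi hj, add_zero]
  zero_mem' := by
    refine ⟨?_, fun i j hi hj => rfl⟩
    rw [transpose_zero, neg_zero]
  smul_mem' := by
    rintro c a ⟨h1, h2⟩
    refine ⟨?_, fun i j hi hj => ?_⟩
    · rw [transpose_smul, h1, smul_neg]
    · rw [Matrix.smul_apply, h2 i j hi hj, smul_zero]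

lemma mem_V_iff (M : Matrix (Fin N) (Fin N) ℂ) :
    M ∈ V N l ↔ Mᵀ = -M ∧ ∀ i j : Fin N, 2 * l ≤ i.1 → 2 * l ≤ j.1 → M i j = 0 :=
  Iff.rfl

lemma range_eq (h2l : 2 * l ≤ N) :
    LinearMap.range (congDiff N (Cmat N l)) = V N l := by
  apply le_antisymm
  · rintro M ⟨X, rfl⟩
    have hCT := Cmat_transpose N l
    refine ⟨?_, fun i j hi hj => ?_⟩
    · show (X * Cmat N l + Cmat N l * Xᵀ)ᵀ = -(X * Cmat N l + Cmat N l * Xᵀ)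
      rw [transpose_add, transpose_mul, transpose_mul, transpose_transpose, hCT,
        neg_mul, mul_neg, neg_add]
      abel
    · show (X * Cmat N l + Cmat N l * Xᵀ) i j = 0
      rw [Matrix.add_apply, mul_apply, mul_apply, Finset.sum_eq_zero, Finset.sum_eq_zero,
        add_zero]
      · intro k _; rw [Cmat_row_zero N l hi, zero_mul]
      · intro k _; rw [Cmat_col_zero N l hj, mul_zero]
  · rintro M ⟨h1, h2⟩
    exact ⟨((1/2 : ℂ) • P N l - 1) * (M * Cmat N l), surj_aux N l h2l h1 h2⟩

abbrev Idx := {p : Fin N × Fin N // p.1 < p.2 ∧ p.1.1 < 2 * l}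

def restr : V N l →ₗ[ℂ] (Idx N l → ℂ) where
  toFun M := fun p => M.1 p.1.1 p.1.2
  map_add' a b := rfl
  map_smul' c a := rfl

lemma restr_bij : Function.Bijective (restr N l) := by
  constructor
  · rw [injective_iff_map_eq_zero]
    rintro ⟨M, hsk, h0⟩ h
    have hz : ∀ p : Idx N l, M p.1.1 p.1.2 = 0 := fun p => congrFun h p
    have key : ∀ i j : Fin N, i < j → M i j = 0 := by
      intro i j hij
      by_cases hi : i.1 < 2 * l
      · exact hz ⟨(i, j), hij, hi⟩
      · refine h0 i j (by omega) ?_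
        rw [Fin.lt_def] at hij; omega
    have hdiag : ∀ i, M i i = 0 := by
      intro i
      have h1 : M i i = -M i i := congrFun (congrFun hsk i) i
      have h2 : (2 : ℂ) * M i i = 0 := by rw [two_mul]; nth_rewrite 1 [h1]; ring
      exact (mul_eq_zero.mp h2).resolve_left two_ne_zero
    apply Subtype.ext
    ext i j
    show M i j = 0
    rcases lt_trichotomy i j with h' | h' | h'
    · exact key i j h'
    · rw [h']; exact hdiag j
    · have : M j i = -M i j := congrFun (congrFun hsk i) j
      have hji := key j i h'
      rw [hji] at this
      simpa using this.symm
  · intro f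
    refine ⟨⟨fun i j =>
      if h : i < j ∧ i.1 < 2 * l then f ⟨(i, j), h⟩
      else if h' : j < i ∧ j.1 < 2 * l then -f ⟨(j, i), h'⟩ else 0, ?_, ?_⟩, ?_⟩
    · ext i j
      show (if h : j < i ∧ j.1 < 2 * l then f ⟨(j, i), h⟩
        else if h' : i < j ∧ i.1 < 2 * l then -f ⟨(i, j), h'⟩ else 0) =
        -(if h : i < j ∧ i.1 < 2 * l then f ⟨(i, j), h⟩
        else if h' : j < i ∧ j.1 < 2 * l then -f ⟨(j, i), h'⟩ else 0)
      split_ifs with h1 h2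
      · exact absurd h2.1 (lt_asymm h1.1)
      · rw [neg_neg]
      · rfl
      · rw [neg_zero]
    · intro i j hi hj
      have n1 : ¬(i < j ∧ i.1 < 2 * l) := fun h => by omega
      have n2 : ¬(j < i ∧ j.1 < 2 * l) := fun h => by omega
      simp only [n1, n2, dif_neg, not_false_iff]
    · funext p
      obtain ⟨⟨i, j⟩, hp⟩ := p
      show (if h : i < j ∧ i.1 < 2 * l then f ⟨(i, j), h⟩
        else if h' : j < i ∧ j.1 < 2 * l then -f ⟨(j, i), h'⟩ else 0) = _
      rw [dif_pos hp]

end Aux4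

namespace Aux5
open Aux Aux2 Aux3 Aux4

variable (N l : ℕ)

lemma finrank_V : Module.finrank ℂ (V N l) = Fintype.card (Idx N l) := by
  rw [(LinearEquiv.ofBijective (restr N l) (restr_bij N l)).finrank_eq,
    Module.finrank_fintype_fun_eq_card]

lemma card_Idx (h2l : 2 * l ≤ N) :
    Fintype.card (Idx N l) = l * (2 * N - 1) - 2 * l ^ 2 := by
  have e : Idx N l ≃ Σ i : Fin N, {j : Fin N // i < j ∧ i.1 < 2 * l} :=
    Equiv.subtypeProdEquivSigmaSubtype (fun (a b : Fin N) => a < b ∧ a.1 < 2 * l)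
  rw [Fintype.card_congr e, Fintype.card_sigma]
  have h1 : ∀ i : Fin N, Fintype.card {j : Fin N // i < j ∧ i.1 < 2 * l}
      = if i.1 < 2 * l then N - 1 - i.1 else 0 := by
    intro i
    by_cases hi : i.1 < 2 * l
    · rw [if_pos hi]
      have : Fintype.card {j : Fin N // i < j ∧ i.1 < 2 * l}
          = Fintype.card {j : Fin N // i < j} := by
        apply Fintype.card_congr
        exact Equiv.subtypeEquivRight (fun j => by simp [hi])
      rw [this, Fintype.card_subtype, Finset.filter_lt_eq_Ioi, Fin.card_Ioi]
    · rw [if_neg hi, Fintype.card_eq_zero_iff]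
      exact ⟨fun j => absurd j.2.2 hi⟩
  simp_rw [h1]
  rw [Fin.sum_univ_eq_sum_range (fun k => if k < 2 * l then N - 1 - k else 0)]
  rw [← Finset.sum_filter]
  have hfil : (Finset.range N).filter (fun k => k < 2 * l) = Finset.range (2 * l) := by
    ext k
    simp only [Finset.mem_filter, Finset.mem_range]
    omega
  rw [hfil]
  -- now compute ∑ k in range (2l), (N - 1 - k)
  rcases Nat.eq_zero_or_pos l with hl | hl
  · subst hl; simp
  have hN1 : 1 ≤ N := by omega
  have hA : (∑ k ∈ Finset.range (2 * l), (N - 1 - k)) + (∑ k ∈ Finset.range (2 * l), k)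
      = 2 * l * (N - 1) := by
    rw [← Finset.sum_add_distrib]
    rw [Finset.sum_congr rfl (g := fun _ => N - 1) (by
      intro k hk
      simp only [Finset.mem_range] at hk
      show N - 1 - k + k = N - 1
      omega)]
    rw [Finset.sum_const, Finset.card_range, smul_eq_mul]
  have hG : (∑ k ∈ Finset.range (2 * l), k) * 2 = 2 * l * (2 * l - 1) :=
    Finset.sum_range_id_mul_two (2 * l)
  have hS : ∑ k ∈ Finset.range (2 * l), (N - 1 - k)
      = 2 * l * (N - 1) - (∑ k ∈ Finset.range (2 * l), k) := by omega
  rw [hS]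
  have hle1 : (∑ k ∈ Finset.range (2 * l), k) ≤ 2 * l * (N - 1) := by omega
  have hle2 : 2 * l ^ 2 ≤ l * (2 * N - 1) := by
    have : 2 * l ≤ 2 * N - 1 := by omega
    calc 2 * l ^ 2 = l * (2 * l) := by ring
    _ ≤ l * (2 * N - 1) := Nat.mul_le_mul_left l this
  have hG' : ((∑ k ∈ Finset.range (2 * l), k) : ℤ) * 2 = 2 * l * (2 * l - 1) := by
    have h2l1 : 1 ≤ 2 * l := by omega
    zify [h2l1] at hG
    exact hG
  zify [hle1, hle2, hN1, show 1 ≤ 2 * N by omega]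
  linarith [hG']

end Aux5

/-- The `GL(N, ℂ)`-congruence orbit of the rank-`2l` skew-symmetric
matrix `C_l` has dimension `l(2N-1) - 2l²`; equivalently, the stabilizer of `C_l` has
dimension `N² - l(2N-1) + 2l²`.  (Dimensions are computed as the ranks of the tangent
map `X ↦ X C_l + C_l Xᵀ` at the identity and of its kernel.) -/
theorem stmt15 (N l : ℕ) (h2l : 2 * l ≤ N) :
    Module.finrank ℂ ↥(LinearMap.range (congDiff N (Cmat N l)))
        = l * (2 * N - 1) - 2 * l ^ 2 ∧
      Module.finrank ℂ ↥(LinearMap.ker (congDiff N (Cmat N l)))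
        = N ^ 2 - (l * (2 * N - 1) - 2 * l ^ 2) := by
  have h1 : Module.finrank ℂ ↥(LinearMap.range (congDiff N (Cmat N l)))
      = l * (2 * N - 1) - 2 * l ^ 2 := by
    rw [Aux4.range_eq N l h2l, Aux5.finrank_V, Aux5.card_Idx N l h2l]
  refine ⟨h1, ?_⟩
  have h2 := LinearMap.finrank_range_add_finrank_ker (congDiff N (Cmat N l))
  have h3 : Module.finrank ℂ (Matrix (Fin N) (Fin N) ℂ) = N ^ 2 := by
    rw [Module.finrank_matrix]
    simp [sq]
  rw [h1, h3] at h2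
  set r := l * (2 * N - 1) - 2 * l ^ 2 with hr
  set m := N ^ 2 with hm
  omega
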